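/- For u > 0 and integer n ≥ 0, define g_n(u) = ∫₀^u (u−v)^n · e^{−v}/√(πv) dv. Then g₀(u) = erf(√u), g₁(u) = (u − 1/2)·erf(√u) + √(u/π)·e^{−u}, and for every n ≥ 2 the three-term linear recursion g_n(u) = (u − n + 1/2)·g_{n−1}(u) + (n−1)·u·g_{n−2}(u) holds. -/

import Mathlib

open MeasureTheory

/-- The Gauss error function `erf(x) = (2/√π)·∫₀^x e^{−s²} ds`. -/
noncomputable def erf (x : ℝ) : ℝ :=
  (2 / Real.sqrt Real.pi) * ∫ s in (0 : ℝ)..x, Real.exp (-s ^ 2)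

/-- `g_n(u) = ∫₀^u (u−v)^n e^{−v}/√(πv) dv`. -/
noncomputable def g (n : ℕ) (u : ℝ) : ℝ :=
  ∫ v in (0 : ℝ)..u, (u - v) ^ n * (Real.exp (-v) / Real.sqrt (Real.pi * v))

lemma intA (u : ℝ) (hu : 0 < u) (k : ℕ) :
    IntervalIntegrable (fun v => (u - v) ^ k * (Real.exp (-v) / Real.sqrt (Real.pi * v))) volume 0 u := by
  have h1 : IntervalIntegrable (fun v : ℝ => v ^ (-(1/2) : ℝ)) volume 0 u :=
    intervalIntegral.intervalIntegrable_rpow' (by norm_num)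
  have h2 : IntervalIntegrable
      (fun v : ℝ => v ^ (-(1/2) : ℝ) * ((u - v) ^ k * Real.exp (-v) / Real.sqrt Real.pi))
      volume 0 u := by
    apply h1.mul_continuousOn
    fun_prop
  apply h2.congr
  have he : Set.uIoc (0:ℝ) u = Set.Ioc 0 u := Set.uIoc_of_le hu.le
  intro v hv
  beta_reduce
  rw [he] at hv
  have hv0 : 0 < v := hv.1
  rw [Real.rpow_neg hv0.le, ← Real.sqrt_eq_rpow, Real.sqrt_mul Real.pi_pos.le]
  have hpi : Real.sqrt Real.pi ≠ 0 := by positivity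
  have hsv : Real.sqrt v ≠ 0 := by positivity
  field_simp

lemma g0_eq (u : ℝ) (hu : 0 < u) : g 0 u = erf (Real.sqrt u) := by
  rw [g]
  have hsu : 0 < Real.sqrt u := Real.sqrt_pos.2 hu
  have himg : (fun x : ℝ => x ^ 2) '' (Set.Ioc 0 (Real.sqrt u)) = Set.Ioc 0 u := by
    ext v
    constructor
    · rintro ⟨x, ⟨hx0, hxu⟩, rfl⟩
      refine ⟨by positivity, ?_⟩
      calc x ^ 2 ≤ Real.sqrt u ^ 2 := by nlinarith
      _ = u := Real.sq_sqrt hu.le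
    · rintro ⟨hv0, hvu⟩
      exact ⟨Real.sqrt v, ⟨Real.sqrt_pos.2 hv0, Real.sqrt_le_sqrt hvu⟩, Real.sq_sqrt hv0.le⟩
  have hsub := integral_image_eq_integral_abs_deriv_smul (f := fun x : ℝ => x ^ 2)
    (f' := fun x : ℝ => 2 * x) (measurableSet_Ioc (a := (0:ℝ)) (b := Real.sqrt u))
    (fun x _ => (hasDerivAt_pow 2 x).hasDerivWithinAt.congr_deriv (by ring))
    (fun x hx y hy hxy => by
      simp only at hxy
      nlinarith [hx.1, hy.1])
    (fun v => Real.exp (-v) / Real.sqrt (Real.pi * v))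
  rw [himg] at hsub
  rw [intervalIntegral.integral_of_le hu.le]
  simp only [pow_zero, one_mul]
  rw [hsub]
  have hcong : ∫ x in Set.Ioc 0 (Real.sqrt u), |2 * x| • (Real.exp (-x ^ 2) / Real.sqrt (Real.pi * x ^ 2))
      = ∫ x in Set.Ioc 0 (Real.sqrt u), (2 / Real.sqrt Real.pi) * Real.exp (-x ^ 2) := by
    apply setIntegral_congr_fun measurableSet_Ioc
    intro x hx
    have hx0 : 0 < x := hx.1
    have h1 : Real.sqrt (Real.pi * x ^ 2) = Real.sqrt Real.pi * x := by
      rw [Real.sqrt_mul Real.pi_pos.le, Real.sqrt_sq hx0.le]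
    simp only [smul_eq_mul]
    rw [h1, abs_of_pos (by linarith : (0:ℝ) < 2 * x)]
    have hpi : Real.sqrt Real.pi ≠ 0 := by positivity
    field_simp
  rw [hcong, integral_const_mul, erf, ← intervalIntegral.integral_of_le (Real.sqrt_nonneg u)]

lemma keyderiv (u : ℝ) (m : ℕ) (v : ℝ) (hv : v ∈ Set.Ioo 0 u) :
    HasDerivAt (fun v => 2 * (u - v) ^ m * Real.exp (-v) * Real.sqrt (v / Real.pi))
      ((Real.exp (-v) / Real.sqrt (Real.pi * v)) *
        ((-2 * m * u) * (u - v) ^ (m - 1) + (2 * m + 1 - 2 * u) * (u - v) ^ m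
          + 2 * (u - v) ^ (m + 1))) v := by
  have hv0 : 0 < v := hv.1
  obtain ⟨s, hs0, rfl⟩ : ∃ s : ℝ, 0 < s ∧ v = s ^ 2 :=
    ⟨Real.sqrt v, Real.sqrt_pos.2 hv0, (Real.sq_sqrt hv0.le).symm⟩
  set v := s ^ 2 with hvdef
  have h1 : HasDerivAt (fun v : ℝ => (u - v) ^ m) ((m : ℝ) * (u - v) ^ (m - 1) * (-1)) v := by
    simpa using HasDerivAt.fun_pow ((hasDerivAt_const v u).sub (hasDerivAt_id v)) m
  have h2 : HasDerivAt (fun v : ℝ => Real.exp (-v)) (-Real.exp (-v)) v := by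
    simpa [Function.comp_def] using (Real.hasDerivAt_exp (-v)).comp v ((hasDerivAt_id v).neg)
  have h3 : HasDerivAt (fun v : ℝ => Real.sqrt (v / Real.pi))
      (1 / (2 * Real.sqrt (v / Real.pi)) * (1 / Real.pi)) v := by
    exact (Real.hasDerivAt_sqrt (by positivity)).comp v ((hasDerivAt_id v).div_const Real.pi)
  have H := (((h1.const_mul 2).fun_mul h2).fun_mul h3)
  convert H using 1
  · rfl
  · rfl
  obtain ⟨p, hp0, hp⟩ : ∃ p : ℝ, 0 < p ∧ Real.pi = p ^ 2 :=
    ⟨Real.sqrt Real.pi, Real.sqrt_pos.2 Real.pi_pos, (Real.sq_sqrt Real.pi_pos.le).symm⟩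
  have hs : s ≠ 0 := hs0.ne'
  have hpn : p ≠ 0 := hp0.ne'
  have e1 : Real.sqrt (v / Real.pi) = s / p := by
    rw [hp, hvdef, Real.sqrt_div (sq_nonneg s), Real.sqrt_sq hs0.le, Real.sqrt_sq hp0.le]
  have e2 : Real.sqrt (Real.pi * v) = p * s := by
    rw [hp, hvdef, Real.sqrt_mul (sq_nonneg p), Real.sqrt_sq hs0.le, Real.sqrt_sq hp0.le]
  rw [e1, e2, hp, hvdef]
  cases m with
  | zero => simp only [pow_zero, Nat.cast_zero, zero_sub]; field_simp; ring
  | succ k =>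
    simp only [Nat.cast_succ, Nat.add_sub_cancel]
    field_simp
    ring

lemma key (u : ℝ) (hu : 0 < u) (m : ℕ) :
    (-2 * (m:ℝ) * u) * g (m-1) u + (2 * (m:ℝ) + 1 - 2 * u) * g m u + 2 * g (m+1) u
      = 2 * (0:ℝ) ^ m * Real.exp (-u) * Real.sqrt (u / Real.pi) := by
  set G : ℝ → ℝ := fun v => (Real.exp (-v) / Real.sqrt (Real.pi * v)) *
        ((-2 * m * u) * (u - v) ^ (m - 1) + (2 * m + 1 - 2 * u) * (u - v) ^ m
          + 2 * (u - v) ^ (m + 1)) with hG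
  have hGeq : G = fun v => (-2 * (m:ℝ) * u) * ((u - v) ^ (m-1) * (Real.exp (-v) / Real.sqrt (Real.pi * v)))
      + ((2 * (m:ℝ) + 1 - 2 * u) * ((u - v) ^ m * (Real.exp (-v) / Real.sqrt (Real.pi * v)))
      + 2 * ((u - v) ^ (m+1) * (Real.exp (-v) / Real.sqrt (Real.pi * v)))) := by
    funext v; simp only [hG]; ring
  have hint : IntervalIntegrable G volume 0 u := by
    rw [hGeq]
    exact (((intA u hu (m-1)).const_mul _).add
      (((intA u hu m).const_mul _).add ((intA u hu (m+1)).const_mul _)))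
  have hcont : ContinuousOn (fun v => 2 * (u - v) ^ m * Real.exp (-v) * Real.sqrt (v / Real.pi))
      (Set.Icc 0 u) := by fun_prop
  have hFTC := intervalIntegral.integral_eq_sub_of_hasDeriv_right_of_le hu.le hcont
    (fun x hx => (keyderiv u m x hx).hasDerivWithinAt) hint
  have hsplit : ∫ v in (0:ℝ)..u, G v
      = (-2 * (m:ℝ) * u) * g (m-1) u + ((2 * (m:ℝ) + 1 - 2 * u) * g m u + 2 * g (m+1) u) := by
    rw [hGeq, intervalIntegral.integral_add ((intA u hu (m-1)).const_mul _)
        (((intA u hu m).const_mul _).add ((intA u hu (m+1)).const_mul _)),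
      intervalIntegral.integral_add ((intA u hu m).const_mul _) ((intA u hu (m+1)).const_mul _),
      intervalIntegral.integral_const_mul, intervalIntegral.integral_const_mul,
      intervalIntegral.integral_const_mul]
    rfl
  rw [hFTC] at hsplit
  have h0 : Real.sqrt ((0:ℝ) / Real.pi) = 0 := by simp
  rw [sub_self u, sub_zero u, h0] at hsplit
  simp only [mul_zero, sub_zero] at hsplit
  linarith [hsplit]

/-- Explicit values of `g₀`, `g₁`, and the three-term linear recursion
`g_n(u) = (u − n + 1/2)·g_{n−1}(u) + (n−1)·u·g_{n−2}(u)` for `n ≥ 2`. -/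
theorem statement18 (u : ℝ) (hu : 0 < u) :
    g 0 u = erf (Real.sqrt u) ∧
    g 1 u = (u - 1 / 2) * erf (Real.sqrt u) + Real.sqrt (u / Real.pi) * Real.exp (-u) ∧
    ∀ n : ℕ, 2 ≤ n →
      g n u = (u - n + 1 / 2) * g (n - 1) u + ((n : ℝ) - 1) * u * g (n - 2) u := by
  have h0 := g0_eq u hu
  refine ⟨h0, ?_, ?_⟩
  · have hk := key u hu 0
    simp only [Nat.cast_zero, pow_zero] at hk
    rw [h0] at hk
    norm_num at hk
    linarith [hk]
  · intro n hn
    have hk := key u hu (n - 1)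
    have e1 : n - 1 - 1 = n - 2 := by omega
    have e2 : n - 1 + 1 = n := by omega
    have e3 : ((n - 1 : ℕ) : ℝ) = (n : ℝ) - 1 := by
      have : (1:ℕ) ≤ n := by omega
      push_cast [Nat.cast_sub this]
      ring
    have e4 : (0:ℝ) ^ (n - 1) = 0 := zero_pow (by omega)
    rw [e1, e2, e3, e4] at hk
    simp only [mul_zero, zero_mul] at hk
    linarith [hk]
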